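/- Let θ > 0 and a ∈ ℝ, set τ = 2·cosh(2θ), Δ = 2 − τ, μ = a/Δ, and let ĉ > 0. Define L̂ : ℝ² → ℝ² by L̂(x,y) = (τx − y + a, x), and define x₁, x₂ : ℝ → ℝ² by x₁(β) = √ĉ·( μ/√ĉ + cosh β / cosh θ, μ/√ĉ + cosh(β − 2θ)/cosh θ ) and x₂(β) = √ĉ·( μ/√ĉ − cosh β / cosh θ, μ/√ĉ − cosh(β − 2θ)/cosh θ ). Then for every β ∈ ℝ, L̂(x₁(β)) = x₁(β + 2θ) and L̂(x₂(β)) = x₂(β + 2θ). -/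

import Mathlib

open Real

/-- for `det A = 1` and `tr A = τ = 2 cosh 2θ > 2`, the affine map
`L̂(x,y) = (τx − y + a, x)` acts on each branch of the constraint curve by translating
the hyperbolic parameter by `2θ`. -/
theorem stmt_14 (θ a : ℝ) (hθ : 0 < θ)
    (τ Δ μ c : ℝ) (hτ : τ = 2 * Real.cosh (2 * θ)) (hΔ : Δ = 2 - τ) (hμ : μ = a / Δ)
    (hc : 0 < c)
    (L : ℝ × ℝ → ℝ × ℝ) (hL : L = fun z => (τ * z.1 - z.2 + a, z.1))
    (x₁ x₂ : ℝ → ℝ × ℝ)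
    (hx₁ : x₁ = fun β => (Real.sqrt c * (μ / Real.sqrt c + Real.cosh β / Real.cosh θ),
      Real.sqrt c * (μ / Real.sqrt c + Real.cosh (β - 2 * θ) / Real.cosh θ)))
    (hx₂ : x₂ = fun β => (Real.sqrt c * (μ / Real.sqrt c - Real.cosh β / Real.cosh θ),
      Real.sqrt c * (μ / Real.sqrt c - Real.cosh (β - 2 * θ) / Real.cosh θ))) :
    ∀ β : ℝ, L (x₁ β) = x₁ (β + 2 * θ) ∧ L (x₂ β) = x₂ (β + 2 * θ) := by
  intro β
  have hs : Real.sqrt c ≠ 0 := ne_of_gt (Real.sqrt_pos.mpr hc)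
  have hch : Real.cosh θ ≠ 0 := ne_of_gt (Real.cosh_pos θ)
  have hΔ0 : Δ ≠ 0 := by
    have : 1 < Real.cosh (2 * θ) := by
      have := Real.one_lt_cosh.mpr (by positivity : (2*θ) ≠ 0)
      linarith
    rw [hΔ, hτ]; linarith
  have ha : a = μ * Δ := by rw [hμ, div_mul_cancel₀ _ hΔ0]
  have key : Real.cosh (β + 2*θ) + Real.cosh (β - 2*θ) = 2 * Real.cosh β * Real.cosh (2*θ) := by
    rw [Real.cosh_add, Real.cosh_sub]; ring
  subst hL hx₁ hx₂ hτ hΔ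
  rw [ha]
  constructor <;> simp only [Prod.mk.injEq] <;> constructor <;>
    [ (field_simp; linear_combination (-(Real.sqrt c)) * key);
      ring_nf;
      (field_simp; linear_combination (Real.sqrt c) * key);
      ring_nf ]
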